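/- Let A ∈ M₂(ℂ) be non-normal. Then for every z on the boundary of F(A), any two unit vectors x, y with x*Ax = y*Ay = z are unimodular scalar multiples of each other (i.e., the preimage f_A^{-1}(z) lies in a one-dimensional complex subspace). -/

import Mathlib

open Matrix

/-- The map `f_A(x) = x* A x` on `ℂ^n` (with the Euclidean norm). -/
noncomputable def numRangeMap {n : ℕ} (A : Matrix (Fin n) (Fin n) ℂ)
    (x : EuclideanSpace ℂ (Fin n)) : ℂ :=
  star (x : Fin n → ℂ) ⬝ᵥ A.mulVec (x : Fin n → ℂ)

/-- The numerical range `F(A)`. -/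
noncomputable def numRange {n : ℕ} (A : Matrix (Fin n) (Fin n) ℂ) : Set ℂ :=
  numRangeMap A '' Metric.sphere 0 1

namespace Stmt18Aux

open ComplexConjugate Module.End Filter Metric

local notation "⟪" x ", " y "⟫" => @inner ℂ _ _ x y

variable {n : ℕ}

lemma nr_inner (A : Matrix (Fin n) (Fin n) ℂ) (x : EuclideanSpace ℂ (Fin n)) :
    numRangeMap A x = ⟪x, (Matrix.toEuclideanCLM (𝕜 := ℂ) A) x⟫ := by
  rw [EuclideanSpace.inner_eq_star_dotProduct, Matrix.ofLp_toEuclideanCLM,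
    dotProduct_comm]
  rfl

lemma nr_continuous (A : Matrix (Fin n) (Fin n) ℂ) : Continuous (numRangeMap A) := by
  have : numRangeMap A = fun x => ⟪x, (Matrix.toEuclideanCLM (𝕜 := ℂ) A) x⟫ :=
    funext (nr_inner A)
  rw [this]
  exact Continuous.inner continuous_id (Matrix.toEuclideanCLM (𝕜 := ℂ) A).continuous

lemma nr_smul_vec (A : Matrix (Fin n) (Fin n) ℂ) (c : ℂ) (v : EuclideanSpace ℂ (Fin n)) :
    numRangeMap A (c • v) = conj c * c * numRangeMap A v := by
  rw [nr_inner, nr_inner, (Matrix.toEuclideanCLM (𝕜 := ℂ) A).map_smul, inner_smul_left, inner_smul_right]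
  ring

lemma nr_unit_smul (A : Matrix (Fin n) (Fin n) ℂ) {c : ℂ} (hc : ‖c‖ = 1)
    (v : EuclideanSpace ℂ (Fin n)) : numRangeMap A (c • v) = numRangeMap A v := by
  rw [nr_smul_vec, mul_comm (conj c) c, Complex.mul_conj]
  simp [← Complex.sq_norm, hc]

lemma dep_pair {x y : EuclideanSpace ℂ (Fin n)} (hx : x ≠ 0)
    (h : ¬ LinearIndependent ℂ ![x, y]) : ∃ c : ℂ, y = c • x := by
  rw [LinearIndependent.pair_iff' hx] at h
  push_neg at h
  obtain ⟨c, hc⟩ := h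
  exact ⟨c, hc.symm⟩

lemma unimodular_of_smul {x y : EuclideanSpace ℂ (Fin n)} (hx : ‖x‖ = 1) (hy : ‖y‖ = 1)
    {c : ℂ} (h : y = c • x) : ‖c‖ = 1 := by
  have := congrArg norm h
  rw [norm_smul, hx, hy, mul_one] at this
  simpa using this.symm

lemma nr_affine (A : Matrix (Fin n) (Fin n) ℂ) (c q : ℂ) {v : EuclideanSpace ℂ (Fin n)}
    (hv : ‖v‖ = 1) :
    numRangeMap (c • (A - q • (1 : Matrix (Fin n) (Fin n) ℂ))) v
      = c * (numRangeMap A v - q) := by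
  have h1 : (Matrix.toEuclideanCLM (𝕜 := ℂ) (c • (A - q • (1 : Matrix (Fin n) (Fin n) ℂ))))
      = c • (Matrix.toEuclideanCLM (𝕜 := ℂ) A - q • 1) := by
    simp only [_root_.map_smul, map_sub, _root_.map_one]
  rw [nr_inner, nr_inner, h1]
  simp only [ContinuousLinearMap.smul_apply, ContinuousLinearMap.sub_apply,
    ContinuousLinearMap.one_apply]
  rw [inner_smul_right, inner_sub_right, inner_smul_right, inner_self_eq_norm_sq_to_K, hv]
  push_cast
  ring

lemma exists_phase (m : ℂ) : ∃ d : ℂ, ‖d‖ = 1 ∧ ((starRingEnd ℂ) d * m).im = 0 := by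
  rcases eq_or_ne m 0 with h | h
  · exact ⟨1, by simp, by simp [h]⟩
  · refine ⟨((‖m‖ : ℝ) : ℂ)⁻¹ * m, ?_, ?_⟩
    · rw [norm_mul, norm_inv, Complex.norm_real, Real.norm_eq_abs,
        abs_of_nonneg (norm_nonneg m)]
      exact inv_mul_cancel₀ (norm_ne_zero_iff.2 h)
    · have h2 : (starRingEnd ℂ) (((‖m‖ : ℝ) : ℂ)⁻¹ * m) * m
          = ((‖m‖ : ℝ) : ℂ)⁻¹ * ((starRingEnd ℂ) m * m) := by
        rw [_root_.map_mul, map_inv₀, Complex.conj_ofReal]; ring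
      rw [h2, mul_comm ((starRingEnd ℂ) m) m, Complex.mul_conj]
      simp

set_option maxHeartbeats 1000000 in
/-- Convexity of the numerical range (Toeplitz–Hausdorff). -/
lemma nr_convex (A : Matrix (Fin n) (Fin n) ℂ) : Convex ℝ (numRange A) := by
  rintro p hp q hq a b ha hb hab
  obtain ⟨x, hxs, hxp⟩ := hp
  obtain ⟨y, hys, hyq⟩ := hq
  rw [mem_sphere_zero_iff_norm] at hxs hys
  by_cases hpq : p = q
  · refine ⟨x, by simpa [mem_sphere_zero_iff_norm] using hxs, ?_⟩
    rw [hxp, hpq, ← add_smul, hab, one_smul]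
  -- now p ≠ q
  have hpq' : p - q ≠ 0 := sub_ne_zero.2 hpq
  set B : Matrix (Fin n) (Fin n) ℂ := (p - q)⁻¹ • (A - q • (1 : Matrix (Fin n) (Fin n) ℂ))
    with hBdef
  have hBval : ∀ v : EuclideanSpace ℂ (Fin n), ‖v‖ = 1 →
      numRangeMap B v = (p - q)⁻¹ * (numRangeMap A v - q) := fun v hv => nr_affine A _ q hv
  have hBx : numRangeMap B x = 1 := by rw [hBval x hxs, hxp]; field_simp
  have hBy : numRangeMap B y = 0 := by rw [hBval y hys, hyq]; simp
  have hxne : x ≠ 0 := fun h => by simp [h] at hxs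
  have hli : LinearIndependent ℂ ![x, y] := by
    by_contra h
    obtain ⟨c, hc⟩ := dep_pair hxne h
    have hc1 : ‖c‖ = 1 := unimodular_of_smul hxs hys hc
    have := hBy
    rw [hc, nr_unit_smul B hc1, hBx] at this
    exact one_ne_zero this
  obtain ⟨d, hd1, hdm⟩ := exists_phase
    (⟪x, (Matrix.toEuclideanCLM (𝕜 := ℂ) B) y⟫
      - (starRingEnd ℂ) ⟪y, (Matrix.toEuclideanCLM (𝕜 := ℂ) B) x⟫)
  have hdne : d ≠ 0 := by
    intro h; rw [h] at hd1; simp at hd1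
  set x' : EuclideanSpace ℂ (Fin n) := d • x with hx'
  have hx's : ‖x'‖ = 1 := by
    rw [hx', norm_smul]
    simp [hd1, hxs]
  have hBx' : numRangeMap B x' = 1 := by rw [hx', nr_unit_smul B hd1, hBx]
  have hli' : LinearIndependent ℂ ![x', y] := by
    rw [LinearIndependent.pair_iff]
    intro s' t' hst
    rw [hx', smul_smul] at hst
    obtain ⟨h1, h2⟩ := LinearIndependent.pair_iff.1 hli _ _ hst
    refine ⟨?_, h2⟩
    rcases mul_eq_zero.1 h1 with h | h
    · exact h
    · exact absurd h hdne
  -- cross term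
  have hwim : (⟪x', (Matrix.toEuclideanCLM (𝕜 := ℂ) B) y⟫
      + ⟪y, (Matrix.toEuclideanCLM (𝕜 := ℂ) B) x'⟫).im = 0 := by
    have e1 : ⟪x', (Matrix.toEuclideanCLM (𝕜 := ℂ) B) y⟫
        = (starRingEnd ℂ) d * ⟪x, (Matrix.toEuclideanCLM (𝕜 := ℂ) B) y⟫ := by
      rw [hx', inner_smul_left]
    have e2 : ⟪y, (Matrix.toEuclideanCLM (𝕜 := ℂ) B) x'⟫
        = d * ⟪y, (Matrix.toEuclideanCLM (𝕜 := ℂ) B) x⟫ := by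
      rw [hx', ContinuousLinearMap.map_smul, inner_smul_right]
    rw [e1, e2]
    set r : ℂ := ⟪x, (Matrix.toEuclideanCLM (𝕜 := ℂ) B) y⟫
    set s : ℂ := ⟪y, (Matrix.toEuclideanCLM (𝕜 := ℂ) B) x⟫
    have e3 : ((starRingEnd ℂ) d * r + d * s).im
        = ((starRingEnd ℂ) d * (r - (starRingEnd ℂ) s)).im := by
      simp only [Complex.add_im, Complex.mul_im, Complex.sub_re, Complex.sub_im,
        Complex.conj_re, Complex.conj_im]
      ring
    rw [e3]
    exact hdm
  set w : ℂ := ⟪x', (Matrix.toEuclideanCLM (𝕜 := ℂ) B) y⟫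
      + ⟪y, (Matrix.toEuclideanCLM (𝕜 := ℂ) B) x'⟫ with hwdef
  -- the path
  set v : ℝ → EuclideanSpace ℂ (Fin n) :=
    fun t => (((1 - t : ℝ)) : ℂ) • x' + ((t : ℝ) : ℂ) • y with hv
  have hvne : ∀ t : ℝ, t ∈ Set.Icc (0:ℝ) 1 → v t ≠ 0 := by
    intro t _ h0
    simp only [hv] at h0
    obtain ⟨h1, h2⟩ := LinearIndependent.pair_iff.1 hli' _ _ h0
    rw [Complex.ofReal_eq_zero] at h1 h2
    rw [h2] at h1
    norm_num at h1
  have e1 : ⟪x', (Matrix.toEuclideanCLM (𝕜 := ℂ) B) x'⟫ = 1 := by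
    rw [← nr_inner]; exact hBx'
  have e2 : ⟪y, (Matrix.toEuclideanCLM (𝕜 := ℂ) B) y⟫ = 0 := by
    rw [← nr_inner]; exact hBy
  have hval : ∀ t : ℝ, numRangeMap B (v t)
      = (((1 - t) ^ 2 : ℝ) : ℂ) + (((1 - t) * t : ℝ) : ℂ) * w := by
    intro t
    rw [nr_inner, hwdef]
    simp only [hv]
    simp only [map_add, ContinuousLinearMap.map_smul, inner_add_left, inner_add_right,
      inner_smul_left, inner_smul_right, Complex.conj_ofReal, e1, e2]
    push_cast
    ring
  have him : ∀ t : ℝ, (numRangeMap B (v t)).im = 0 := by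
    intro t
    rw [hval t]
    simp [pow_two, Complex.add_im, Complex.mul_im, Complex.mul_re, Complex.sub_im,
      Complex.sub_re, Complex.one_im, Complex.one_re, Complex.ofReal_re, Complex.ofReal_im,
      hwim]
  have hvcont : Continuous v := by
    rw [hv]
    exact ((Complex.continuous_ofReal.comp (continuous_const.sub continuous_id)).smul
      continuous_const).add ((Complex.continuous_ofReal).smul continuous_const)
  set g : ℝ → ℝ := fun t => (numRangeMap B (v t)).re / ‖v t‖ ^ 2 with hg
  have hgcont : ContinuousOn g (Set.Icc (0:ℝ) 1) := by
    apply ContinuousOn.div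
    · exact (Complex.continuous_re.comp ((nr_continuous B).comp hvcont)).continuousOn
    · exact ((continuous_norm.comp hvcont).pow 2).continuousOn
    · intro t ht
      exact pow_ne_zero 2 (norm_ne_zero_iff.2 (hvne t ht))
  have hv0 : v 0 = x' := by simp [hv]
  have hv1 : v 1 = y := by simp [hv]
  have hg0 : g 0 = 1 := by
    simp only [hg, hv0, hx's, hBx']
    norm_num
  have hg1 : g 1 = 0 := by
    simp only [hg, hv1, hys, hBy]
    norm_num
  have hmem : a ∈ Set.Icc (g 1) (g 0) := by
    rw [hg0, hg1]; constructor <;> linarith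
  have hIVT := intermediate_value_Icc' (by norm_num : (0:ℝ) ≤ 1) hgcont
  obtain ⟨t, ht, hta⟩ := hIVT hmem
  simp only [hg] at hta
  have hvnet := hvne t ht
  have hnz : ‖v t‖ ≠ 0 := norm_ne_zero_iff.2 hvnet
  set vu : EuclideanSpace ℂ (Fin n) := ((‖v t‖⁻¹ : ℝ) : ℂ) • v t with hvu
  have hvu1 : ‖vu‖ = 1 := by
    have h9 : ‖vu‖ = ‖v t‖⁻¹ * ‖v t‖ := by
      rw [hvu, norm_smul, Complex.norm_real, Real.norm_eq_abs,
        abs_of_nonneg (inv_nonneg.2 (norm_nonneg _))]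
    rw [h9, inv_mul_cancel₀ hnz]
  have hval' : numRangeMap B vu = (a : ℂ) := by
    rw [hvu, nr_smul_vec, Complex.conj_ofReal, ← Complex.ofReal_mul]
    apply Complex.ext
    · rw [Complex.re_ofReal_mul, Complex.ofReal_re, ← hta]
      rw [pow_two, div_eq_mul_inv, mul_inv]
      ring
    · rw [Complex.im_ofReal_mul, him t, mul_zero, Complex.ofReal_im]
  refine ⟨vu, mem_sphere_zero_iff_norm.2 hvu1, ?_⟩
  have hfin := hBval vu hvu1
  rw [hval'] at hfin
  have hAvu : numRangeMap A vu = (p - q) * a + q := by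
    field_simp at hfin
    linear_combination -hfin
  rw [hAvu]
  have hb' : (b:ℝ) = 1 - a := by linarith
  rw [Complex.real_smul, Complex.real_smul, hb']
  push_cast
  ring

lemma nr_madd (A B : Matrix (Fin n) (Fin n) ℂ) (v : EuclideanSpace ℂ (Fin n)) :
    numRangeMap (A + B) v = numRangeMap A v + numRangeMap B v := by
  rw [nr_inner, nr_inner, nr_inner, map_add, ContinuousLinearMap.add_apply, inner_add_right]

lemma nr_msmul (c : ℂ) (A : Matrix (Fin n) (Fin n) ℂ) (v : EuclideanSpace ℂ (Fin n)) :
    numRangeMap (c • A) v = c * numRangeMap A v := by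
  rw [nr_inner, nr_inner, _root_.map_smul, ContinuousLinearMap.smul_apply, inner_smul_right]

lemma nr_conjT (A : Matrix (Fin n) (Fin n) ℂ) (v : EuclideanSpace ℂ (Fin n)) :
    numRangeMap Aᴴ v = (starRingEnd ℂ) (numRangeMap A v) := by
  rw [nr_inner, nr_inner]
  have h1 : Matrix.toEuclideanCLM (𝕜 := ℂ) Aᴴ
      = star (Matrix.toEuclideanCLM (𝕜 := ℂ) A) := by
    rw [← map_star, Matrix.star_eq_conjTranspose]
  rw [h1, ContinuousLinearMap.star_eq_adjoint, ContinuousLinearMap.adjoint_inner_right,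
    ← inner_conj_symm]

lemma nr_herm (A : Matrix (Fin n) (Fin n) ℂ) (u : ℂ) (v : EuclideanSpace ℂ (Fin n)) :
    numRangeMap ((2⁻¹ : ℂ) • ((starRingEnd ℂ) u • A + u • Aᴴ)) v
      = ((((starRingEnd ℂ) u * numRangeMap A v).re : ℝ) : ℂ) := by
  rw [nr_msmul, nr_madd, nr_msmul, nr_msmul, nr_conjT]
  have h1 : u * (starRingEnd ℂ) (numRangeMap A v)
      = (starRingEnd ℂ) ((starRingEnd ℂ) u * numRangeMap A v) := by
    rw [_root_.map_mul, Complex.conj_conj]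
  rw [h1, Complex.add_conj]
  push_cast
  ring

lemma herm_selfAdj (A : Matrix (Fin n) (Fin n) ℂ) (u : ℂ) :
    IsSelfAdjoint (Matrix.toEuclideanCLM (𝕜 := ℂ)
      ((2⁻¹ : ℂ) • ((starRingEnd ℂ) u • A + u • Aᴴ))) := by
  rw [_root_.IsSelfAdjoint, ← map_star]
  congr 1
  rw [Matrix.star_eq_conjTranspose, Matrix.conjTranspose_smul, Matrix.conjTranspose_add,
    Matrix.conjTranspose_smul, Matrix.conjTranspose_smul, Matrix.conjTranspose_conjTranspose]
  have h1 : star (2⁻¹ : ℂ) = (2⁻¹ : ℂ) := by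
    rw [star_inv₀]
    norm_num
  rw [h1]
  simp only [Complex.star_def, Complex.conj_conj]
  rw [add_comm]

set_option maxHeartbeats 1000000 in
theorem main (A : Matrix (Fin 2) (Fin 2) ℂ) (hA : A * Aᴴ ≠ Aᴴ * A)
    (z : ℂ) (hz : z ∈ frontier (numRange A))
    (x y : EuclideanSpace ℂ (Fin 2)) (hx : ‖x‖ = 1) (hy : ‖y‖ = 1)
    (hfx : numRangeMap A x = z) (hfy : numRangeMap A y = z) :
    ∃ c : ℂ, ‖c‖ = 1 ∧ y = c • x := by
  classical
  have hFc : IsCompact (numRange A) := (isCompact_sphere 0 1).image (nr_continuous A)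
  have hFcl : IsClosed (numRange A) := hFc.isClosed
  have hFconv : Convex ℝ (numRange A) := nr_convex A
  have hxs : x ∈ Metric.sphere (0 : EuclideanSpace ℂ (Fin 2)) 1 :=
    mem_sphere_zero_iff_norm.2 hx
  have hzF : z ∈ numRange A := ⟨x, hxs, hfx⟩
  rw [hFcl.frontier_eq] at hz
  have hzi : z ∉ interior (numRange A) := hz.2
  -- a sequence of points outside `numRange A` converging to `z`
  have hseq : ∀ k : ℕ, ∃ w : ℂ, w ∉ numRange A ∧ dist w z < 1/(k+1) := by
    intro k
    by_contra hcon
    push_neg at hcon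
    apply hzi
    rw [mem_interior_iff_mem_nhds, Metric.mem_nhds_iff]
    refine ⟨1/(k+1), by positivity, fun w hw => ?_⟩
    by_contra hwF
    exact absurd (Metric.mem_ball.1 hw) (not_lt.2 (hcon w hwF))
  choose zs hzsF hzsd using hseq
  have hzs_tendsto : Filter.Tendsto zs Filter.atTop (nhds z) := by
    rw [tendsto_iff_dist_tendsto_zero]
    refine squeeze_zero (fun k => dist_nonneg) (fun k => (hzsd k).le) ?_
    exact tendsto_one_div_add_atTop_nhds_zero_nat
  -- strictly separating unit functionals
  have hsepk : ∀ k : ℕ, ∃ u : ℂ, ‖u‖ = 1 ∧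
      ∀ w ∈ numRange A, ((starRingEnd ℂ) u * w).re < ((starRingEnd ℂ) u * zs k).re := by
    intro k
    obtain ⟨f, c, hfc, hcz⟩ := geometric_hahn_banach_closed_point hFconv hFcl (hzsF k)
    set u0 : ℂ := ⟨f 1, f Complex.I⟩ with hu0
    have hfu : ∀ w : ℂ, f w = ((starRingEnd ℂ) u0 * w).re := by
      intro w
      have hw : w = (w.re : ℝ) • (1:ℂ) + (w.im : ℝ) • Complex.I := by
        rw [Complex.real_smul, Complex.real_smul, mul_one]
        exact (Complex.re_add_im w).symm
      conv_lhs => rw [hw]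
      rw [map_add, f.map_smul, f.map_smul, smul_eq_mul, smul_eq_mul,
        Complex.mul_re, Complex.conj_re, Complex.conj_im]
      rw [hu0]
      ring
    have hu0ne : u0 ≠ 0 := by
      intro h0
      have h1 : f z < c := hfc z hzF
      have h2 : c < f (zs k) := hcz
      rw [hfu z, h0] at h1
      rw [hfu (zs k), h0] at h2
      simp at h1 h2
      linarith
    have habs : ‖u0‖ ≠ 0 := norm_ne_zero_iff.2 hu0ne
    have habs' : (0:ℝ) < (‖u0‖)⁻¹ := by positivity
    refine ⟨((‖u0‖ : ℝ) : ℂ)⁻¹ * u0, ?_, ?_⟩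
    · rw [norm_mul, norm_inv, Complex.norm_real, Real.norm_eq_abs,
        abs_of_nonneg (norm_nonneg u0)]
      exact inv_mul_cancel₀ habs
    · intro w hw
      have hlt : ((starRingEnd ℂ) u0 * w).re < ((starRingEnd ℂ) u0 * zs k).re := by
        rw [← hfu w, ← hfu (zs k)]
        exact lt_trans (hfc w hw) hcz
      have hconj : (starRingEnd ℂ) (((‖u0‖ : ℝ) : ℂ)⁻¹ * u0)
          = (((‖u0‖)⁻¹ : ℝ) : ℂ) * (starRingEnd ℂ) u0 := by
        rw [_root_.map_mul, map_inv₀, Complex.conj_ofReal, Complex.ofReal_inv]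
      rw [hconj, mul_assoc, mul_assoc, Complex.re_ofReal_mul, Complex.re_ofReal_mul]
      exact mul_lt_mul_of_pos_left hlt habs'
  choose us hus1 husP using hsepk
  have hus_mem : ∀ k, us k ∈ Metric.sphere (0:ℂ) 1 := by
    intro k
    rw [mem_sphere_zero_iff_norm]
    exact hus1 k
  obtain ⟨u, humem, φ, hφmono, hulim⟩ := (isCompact_sphere (0:ℂ) 1).tendsto_subseq hus_mem
  have hu1 : ‖u‖ = 1 := by
    rw [mem_sphere_zero_iff_norm] at humem
    exact humem
  have hune : u ≠ 0 := by
    intro h0; rw [h0] at hu1; simp at hu1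
  -- the limiting supporting functional
  have hsep : ∀ w ∈ numRange A, ((starRingEnd ℂ) u * w).re ≤ ((starRingEnd ℂ) u * z).re := by
    intro w hw
    have hc1 : Continuous fun q : ℂ => (((starRingEnd ℂ) q) * w).re :=
      Complex.continuous_re.comp (Complex.continuous_conj.mul continuous_const)
    have hlhs : Filter.Tendsto (fun k => ((starRingEnd ℂ) (us (φ k)) * w).re)
        Filter.atTop (nhds (((starRingEnd ℂ) u * w).re)) :=
      (hc1.tendsto u).comp hulim
    have h1 : Filter.Tendsto (fun k => (starRingEnd ℂ) (us (φ k)))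
        Filter.atTop (nhds ((starRingEnd ℂ) u)) :=
      (Complex.continuous_conj.tendsto u).comp hulim
    have h2 : Filter.Tendsto (fun k => zs (φ k)) Filter.atTop (nhds z) :=
      hzs_tendsto.comp hφmono.tendsto_atTop
    have hrhs : Filter.Tendsto (fun k => ((starRingEnd ℂ) (us (φ k)) * zs (φ k)).re)
        Filter.atTop (nhds (((starRingEnd ℂ) u * z).re)) :=
      (Complex.continuous_re.tendsto _).comp (h1.mul h2)
    exact le_of_tendsto_of_tendsto' hlhs hrhs (fun k => (husP (φ k) w hw).le)
  -- the Hermitian part in direction `u`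
  have hTsa : IsSelfAdjoint (Matrix.toEuclideanCLM (𝕜 := ℂ)
      ((2⁻¹ : ℂ) • ((starRingEnd ℂ) u • A + u • Aᴴ))) := herm_selfAdj A u
  have hreap : ∀ v : EuclideanSpace ℂ (Fin 2),
      (Matrix.toEuclideanCLM (𝕜 := ℂ)
        ((2⁻¹ : ℂ) • ((starRingEnd ℂ) u • A + u • Aᴴ))).reApplyInnerSelf v
      = ((starRingEnd ℂ) u * numRangeMap A v).re := by
    intro v
    rw [ContinuousLinearMap.reApplyInnerSelf_apply]
    rw [← inner_conj_symm, ← nr_inner, nr_herm]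
    simp [Complex.conj_ofReal]
  have hmax : ∀ v : EuclideanSpace ℂ (Fin 2), ‖v‖ = 1 → numRangeMap A v = z →
      IsMaxOn (Matrix.toEuclideanCLM (𝕜 := ℂ)
        ((2⁻¹ : ℂ) • ((starRingEnd ℂ) u • A + u • Aᴴ))).reApplyInnerSelf
        (Metric.sphere 0 ‖v‖) v := by
    intro v hv hfv
    rw [hv, isMaxOn_iff]
    intro w hw
    rw [hreap w, hreap v, hfv]
    exact hsep _ ⟨w, hw, rfl⟩
  have hx0 : x ≠ 0 := by intro h; rw [h] at hx; simp at hx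
  have hy0 : y ≠ 0 := by intro h; rw [h] at hy; simp at hy
  have hex := hTsa.hasEigenvector_of_isMaxOn hx0 (hmax x hx hfx)
  have hey := hTsa.hasEigenvector_of_isMaxOn hy0 (hmax y hy hfy)
  by_cases hli : LinearIndependent ℂ ![x, y]
  · exfalso
    obtain ⟨lam, hTx, hTy⟩ : ∃ lam : ℂ,
        (Matrix.toEuclideanCLM (𝕜 := ℂ)
          ((2⁻¹ : ℂ) • ((starRingEnd ℂ) u • A + u • Aᴴ))) x = lam • x ∧
        (Matrix.toEuclideanCLM (𝕜 := ℂ)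
          ((2⁻¹ : ℂ) • ((starRingEnd ℂ) u • A + u • Aᴴ))) y = lam • y :=
      ⟨_, hex.apply_eq_smul, hey.apply_eq_smul⟩
    have hcard : Fintype.card (Fin 2) = Module.finrank ℂ (EuclideanSpace ℂ (Fin 2)) := by
      simp [finrank_euclideanSpace_fin]
    set b := basisOfLinearIndependentOfCardEqFinrank hli hcard with hbdef
    have hbc : ⇑b = ![x, y] := coe_basisOfLinearIndependentOfCardEqFinrank _ _
    have hlin : ((Matrix.toEuclideanCLM (𝕜 := ℂ)
        ((2⁻¹ : ℂ) • ((starRingEnd ℂ) u • A + u • Aᴴ)))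
          : EuclideanSpace ℂ (Fin 2) →ₗ[ℂ] EuclideanSpace ℂ (Fin 2))
        = lam • (LinearMap.id : EuclideanSpace ℂ (Fin 2) →ₗ[ℂ] EuclideanSpace ℂ (Fin 2)) := by
      apply b.ext
      intro i
      fin_cases i
      · simp only [hbc]
        simpa using hTx
      · simp only [hbc]
        simpa using hTy
    have hMat : (2⁻¹ : ℂ) • ((starRingEnd ℂ) u • A + u • Aᴴ)
        = lam • (1 : Matrix (Fin 2) (Fin 2) ℂ) := by
      have hclm : Matrix.toEuclideanCLM (𝕜 := ℂ) ((2⁻¹ : ℂ) • ((starRingEnd ℂ) u • A + u • Aᴴ))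
          = Matrix.toEuclideanCLM (𝕜 := ℂ) (lam • (1 : Matrix (Fin 2) (Fin 2) ℂ)) := by
        rw [_root_.map_smul (Matrix.toEuclideanCLM (𝕜 := ℂ)) lam (1 : Matrix (Fin 2) (Fin 2) ℂ),
          _root_.map_one (Matrix.toEuclideanCLM (𝕜 := ℂ) (n := Fin 2))]
        apply ContinuousLinearMap.coe_injective
        rw [hlin]
        ext v
        simp
      exact (Matrix.toEuclideanCLM (𝕜 := ℂ) (n := Fin 2)).injective hclm
    have hE : (starRingEnd ℂ) u • A + u • Aᴴ
        = (2 * lam) • (1 : Matrix (Fin 2) (Fin 2) ℂ) := by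
      calc (starRingEnd ℂ) u • A + u • Aᴴ
          = (2:ℂ) • ((2⁻¹ : ℂ) • ((starRingEnd ℂ) u • A + u • Aᴴ)) := by
            rw [smul_smul]; norm_num
        _ = (2:ℂ) • (lam • (1 : Matrix (Fin 2) (Fin 2) ℂ)) := by rw [hMat]
        _ = (2 * lam) • (1 : Matrix (Fin 2) (Fin 2) ℂ) := by rw [smul_smul]
    have h1 : (starRingEnd ℂ) u • (A * Aᴴ) + u • (Aᴴ * Aᴴ) = (2*lam) • Aᴴ := by
      calc (starRingEnd ℂ) u • (A * Aᴴ) + u • (Aᴴ * Aᴴ)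
          = ((starRingEnd ℂ) u • A + u • Aᴴ) * Aᴴ := by
            rw [Matrix.add_mul, Matrix.smul_mul, Matrix.smul_mul]
        _ = ((2*lam) • (1 : Matrix (Fin 2) (Fin 2) ℂ)) * Aᴴ := by rw [hE]
        _ = (2*lam) • Aᴴ := by rw [Matrix.smul_mul, Matrix.one_mul]
    have h2 : (starRingEnd ℂ) u • (Aᴴ * A) + u • (Aᴴ * Aᴴ) = (2*lam) • Aᴴ := by
      calc (starRingEnd ℂ) u • (Aᴴ * A) + u • (Aᴴ * Aᴴ)
          = Aᴴ * ((starRingEnd ℂ) u • A + u • Aᴴ) := by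
            rw [Matrix.mul_add, Matrix.mul_smul, Matrix.mul_smul]
        _ = Aᴴ * ((2*lam) • (1 : Matrix (Fin 2) (Fin 2) ℂ)) := by rw [hE]
        _ = (2*lam) • Aᴴ := by rw [Matrix.mul_smul, Matrix.mul_one]
    have h3 : (starRingEnd ℂ) u • (A * Aᴴ) = (starRingEnd ℂ) u • (Aᴴ * A) :=
      add_right_cancel (h1.trans h2.symm)
    have hune' : (starRingEnd ℂ) u ≠ 0 := by
      simpa using hune
    exact hA (smul_right_injective _ hune' h3)
  · obtain ⟨c, hc⟩ := dep_pair hx0 hli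
    exact ⟨c, unimodular_of_smul hx hy hc, hc⟩

end Stmt18Aux

theorem stmt_18 (A : Matrix (Fin 2) (Fin 2) ℂ) (hA : A * Aᴴ ≠ Aᴴ * A)
    (z : ℂ) (hz : z ∈ frontier (numRange A))
    (x y : EuclideanSpace ℂ (Fin 2)) (hx : ‖x‖ = 1) (hy : ‖y‖ = 1)
    (hfx : numRangeMap A x = z) (hfy : numRangeMap A y = z) :
    ∃ c : ℂ, ‖c‖ = 1 ∧ y = c • x := by
  exact Stmt18Aux.main A hA z hz x y hx hy hfx hfy
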